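/- If Φ : ℝ → ℝ is twice differentiable, satisfies D·Φ''(x) = sinh(Φ(x)), Φ(0) = 0, Φ'(0) = 0, and Φ(x) ≥ 0 with Φ' ≤ 0 on [x₀, 0] for some x₀ < 0, then Φ'(x) = −(2/√D)·sinh(Φ(x)/2) for all x in [x₀, 0]. -/

import Mathlib

/-- If `D Φ'' = sinh Φ`, `Φ 0 = 0`, `Φ' 0 = 0`, and `Φ ≥ 0`, `Φ' ≤ 0` on `[x₀, 0]`,
then `Φ' x = −(2/√D) sinh (Φ x / 2)` on `[x₀, 0]`. -/
theorem pb_first_order_ode (D : ℝ) (hD : 0 < D) (x₀ : ℝ) (hx₀ : x₀ < 0)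
    (Φ Φ' Φ'' : ℝ → ℝ)
    (hΦ : ∀ x : ℝ, HasDerivAt Φ (Φ' x) x)
    (hΦ' : ∀ x : ℝ, HasDerivAt Φ' (Φ'' x) x)
    (hODE : ∀ x : ℝ, D * Φ'' x = Real.sinh (Φ x))
    (hΦ0 : Φ 0 = 0) (hΦ'0 : Φ' 0 = 0)
    (hsign : ∀ x ∈ Set.Icc x₀ 0, 0 ≤ Φ x ∧ Φ' x ≤ 0) :
    ∀ x ∈ Set.Icc x₀ 0,
      Φ' x = -(2 / Real.sqrt D) * Real.sinh (Φ x / 2) := by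
  set E : ℝ → ℝ := fun x => D / 2 * (Φ' x) ^ 2 - (Real.cosh (Φ x) - 1) with hE
  have hEderiv : ∀ x : ℝ, HasDerivAt E 0 x := by
    intro x
    have h1 : HasDerivAt (fun x => D / 2 * (Φ' x) ^ 2)
        (D / 2 * ((2 : ℕ) * Φ' x ^ (2 - 1) * Φ'' x)) x := ((hΦ' x).pow 2).const_mul _
    have h2 : HasDerivAt (fun x => Real.cosh (Φ x) - 1)
        (Real.sinh (Φ x) * Φ' x) x := ((hΦ x).cosh).sub_const 1
    have := h1.sub h2
    refine this.congr_deriv (Eq.symm ?_)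
    push_cast
    norm_num
    linear_combination -(Φ' x) * hODE x
  have hEconst : ∀ x : ℝ, E x = E 0 := by
    intro x
    have : ∀ y : ℝ, deriv E y = 0 := fun y => (hEderiv y).deriv
    have hdiff : Differentiable ℝ E := fun y => (hEderiv y).differentiableAt
    exact is_const_of_deriv_eq_zero hdiff this x 0
  have hE0 : E 0 = 0 := by simp [hE, hΦ0, hΦ'0, Real.cosh_zero]
  intro x hx
  obtain ⟨hΦpos, hΦ'neg⟩ := hsign x hx
  have hEx : D / 2 * (Φ' x) ^ 2 = Real.cosh (Φ x) - 1 := by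
    have := hEconst x
    rw [hE0] at this
    simpa [hE] using sub_eq_zero.mp this
  -- cosh t - 1 = 2 sinh(t/2)^2
  have hhalf : Real.cosh (Φ x) - 1 = 2 * Real.sinh (Φ x / 2) ^ 2 := by
    have h2 : Real.cosh (2 * (Φ x / 2)) = 2 * Real.cosh (Φ x / 2) ^ 2 - 1 :=
      by rw [Real.cosh_two_mul]; nlinarith [Real.cosh_sq_sub_sinh_sq (Φ x / 2)]
    have h3 : Real.cosh (Φ x / 2) ^ 2 - Real.sinh (Φ x / 2) ^ 2 = 1 :=
      Real.cosh_sq_sub_sinh_sq _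
    have : (2 : ℝ) * (Φ x / 2) = Φ x := by ring
    rw [this] at h2
    nlinarith
  have hs : 0 ≤ Real.sinh (Φ x / 2) := Real.sinh_nonneg_iff.mpr (by linarith)
  have hsqrt : Real.sqrt D > 0 := Real.sqrt_pos.mpr hD
  have hsq : Real.sqrt D ^ 2 = D := Real.sq_sqrt hD.le
  have key : (Φ' x) ^ 2 = (2 / Real.sqrt D * Real.sinh (Φ x / 2)) ^ 2 := by
    field_simp
    nlinarith [hEx, hhalf]
  have hb : 0 ≤ 2 / Real.sqrt D * Real.sinh (Φ x / 2) :=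
    mul_nonneg (by positivity) hs
  nlinarith [sq_nonneg (Φ' x + 2 / Real.sqrt D * Real.sinh (Φ x / 2))]
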